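/- A minimum-weight spanning tree of the complete Euclidean graph on a finite planar point set (with distinct pairwise distances) is a subgraph of the relative neighbourhood graph; in particular the RNG has at least n − 1 edges when n ≥ 1. -/

import Mathlib

def rngGraph (n : ℕ) (p : Fin n → EuclideanSpace ℝ (Fin 2)) : SimpleGraph (Fin n) :=
  SimpleGraph.fromRel (fun i j =>
    ¬ ∃ k : Fin n, ‖p i - p k‖ < ‖p i - p j‖ ∧ ‖p j - p k‖ < ‖p i - p j‖)

open scoped Classical in
/-- Total Euclidean weight of a graph on the points `p`. -/
noncomputable def euclWeight (n : ℕ) (p : Fin n → EuclideanSpace ℝ (Fin 2))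
    (G : SimpleGraph (Fin n)) : ℝ :=
  ∑ e ∈ Finset.univ.filter (fun e : Sym2 (Fin n) => e ∈ G.edgeSet),
    Sym2.lift ⟨fun i j => dist (p i) (p j), fun i j => dist_comm (p i) (p j)⟩ e

open SimpleGraph in
private lemma walk_tri {V : Type*} {G : SimpleGraph V} (i j : V) {v w : V} (wk : G.Walk v w) :
    (G \ fromEdgeSet {s(i,j)}).Reachable v w ∨
      ((G \ fromEdgeSet {s(i,j)}).Reachable v i ∧ (G \ fromEdgeSet {s(i,j)}).Reachable j w) ∨
      ((G \ fromEdgeSet {s(i,j)}).Reachable v j ∧ (G \ fromEdgeSet {s(i,j)}).Reachable i w) := by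
  induction wk with
  | nil => exact Or.inl (Reachable.refl _)
  | @cons a b c h q ih =>
    by_cases he : s(a, b) = s(i, j)
    · rcases Sym2.eq_iff.mp he with ⟨rfl, rfl⟩ | ⟨rfl, rfl⟩
      · rcases ih with h1 | ⟨h2, h3⟩ | ⟨h2, h3⟩
        · exact Or.inr (Or.inl ⟨Reachable.refl _, h1⟩)
        · exact Or.inl (h2.symm.trans h3)
        · exact Or.inl h3
      · rcases ih with h1 | ⟨h2, h3⟩ | ⟨h2, h3⟩
        · exact Or.inr (Or.inr ⟨Reachable.refl _, h1⟩)
        · exact Or.inl h3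
        · exact Or.inl (h2.symm.trans h3)
    · have hadj' : (G \ fromEdgeSet {s(i,j)}).Adj a b := by
        rw [sdiff_adj, fromEdgeSet_adj]
        exact ⟨h, fun ⟨hm, _⟩ => he (Set.mem_singleton_iff.mp hm)⟩
      rcases ih with h1 | ⟨h2, h3⟩ | ⟨h2, h3⟩
      · exact Or.inl (hadj'.reachable.trans h1)
      · exact Or.inr (Or.inl ⟨hadj'.reachable.trans h2, h3⟩)
      · exact Or.inr (Or.inr ⟨hadj'.reachable.trans h2, h3⟩)

private lemma filter_sum_lt {α : Type*} [Fintype α] [DecidableEq α] (f : α → ℝ)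
    (S S' : Set α) [DecidablePred (· ∈ S)] [DecidablePred (· ∈ S')]
    (a b : α) (ha : a ∈ S) (hb : b ∉ S)
    (hiff : ∀ e, e ∈ S' ↔ (e ∈ S ∧ e ≠ a) ∨ e = b)
    (hf : f b < f a) :
    ∑ e ∈ Finset.univ.filter (fun e => e ∈ S'), f e
      < ∑ e ∈ Finset.univ.filter (fun e => e ∈ S), f e := by
  have hB : Finset.univ.filter (fun e => e ∈ S')
      = insert b ((Finset.univ.filter (fun e => e ∈ S)).erase a) := by
    ext e
    simp only [Finset.mem_filter, Finset.mem_univ, true_and, Finset.mem_insert,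
      Finset.mem_erase]
    rw [hiff]
    tauto
  rw [hB, Finset.sum_insert (by simp [hb]),
    ← Finset.add_sum_erase _ f (by simp [ha] : a ∈ Finset.univ.filter (fun e => e ∈ S))]
  exact add_lt_add_of_lt_of_le hf le_rfl

open SimpleGraph in
private lemma exchange (n : ℕ) (p : Fin n → EuclideanSpace ℝ (Fin 2))
    (T : SimpleGraph (Fin n)) (hT : T.IsTree)
    (hmin : ∀ T' : SimpleGraph (Fin n), T'.IsTree →
      euclWeight n p T ≤ euclWeight n p T')
    (i j k : Fin n) (hadj : T.Adj i j)
    (hik : dist (p i) (p k) < dist (p i) (p j))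
    (hjk : dist (p j) (p k) < dist (p i) (p j))
    (hr : (T \ fromEdgeSet {s(i,j)}).Reachable j k) : False := by
  classical
  set T₀ := T \ fromEdgeSet {s(i,j)} with hT₀def
  have hij : i ≠ j := hadj.ne
  have hki : k ≠ i := by rintro rfl; rw [dist_comm (p j) (p k)] at hjk; exact lt_irrefl _ hjk
  have hkj : k ≠ j := by rintro rfl; exact lt_irrefl _ hik
  have hbridge : ¬ T₀.Reachable i j :=
    (isBridge_iff.mp ((isAcyclic_iff_forall_adj_isBridge.mp hT.IsAcyclic) hadj))
  have hsik : s(i, k) ≠ s(i, j) := by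
    simp [Sym2.eq_iff, hkj, hij]
  have hTik : ¬ T.Adj i k := by
    intro h
    have h0 : T₀.Adj i k := by
      rw [hT₀def, sdiff_adj, fromEdgeSet_adj]
      exact ⟨h, fun ⟨hm, _⟩ => hsik (Set.mem_singleton_iff.mp hm)⟩
    exact hbridge (h0.reachable.trans hr.symm)
  set T' := T₀ ⊔ edge i k with hT'def
  have hT'ik : T'.Adj i k := Or.inr ((edge_adj i k i k).2 ⟨Or.inl ⟨rfl, rfl⟩, hki.symm⟩)
  have hT'nij : ¬ T'.Adj i j := by
    rintro (h | h)
    · rw [hT₀def, sdiff_adj, fromEdgeSet_adj] at h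
      exact h.2 ⟨rfl, hij⟩
    · rw [edge_adj] at h
      rcases h.1 with ⟨_, rfl⟩ | ⟨rfl, _⟩
      · exact hkj rfl
      · exact hki rfl
  -- reach i j within T'
  have hT'rij : T'.Reachable i j := hT'ik.reachable.trans ((hr.mono le_sup_left).symm)
  -- T' connected
  have e1 : T' ≤ (T' ⊔ edge i j) \ fromEdgeSet {s(i,j)} := by
    intro v w h
    rw [sdiff_adj, fromEdgeSet_adj]
    refine ⟨Or.inl h, ?_⟩
    rintro ⟨hm, hne⟩
    rcases Sym2.eq_iff.mp (Set.mem_singleton_iff.mp hm) with ⟨rfl, rfl⟩ | ⟨rfl, rfl⟩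
    · exact hT'nij h
    · exact hT'nij h.symm
  have e2 : (T' ⊔ edge i j) \ fromEdgeSet {s(i,j)} ≤ T' := by
    intro v w h
    rw [sdiff_adj, fromEdgeSet_adj] at h
    rcases h.1 with h1 | h1
    · exact h1
    · exfalso
      rw [edge_adj] at h1
      apply h.2
      refine ⟨?_, h1.2⟩
      rcases h1.1 with ⟨rfl, rfl⟩ | ⟨rfl, rfl⟩
      · rfl
      · exact Sym2.eq_swap
  have hle : T ≤ T' ⊔ edge i j := by
    intro v w h
    by_cases he : s(v, w) = s(i, j)
    · right
      rw [edge_adj]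
      rcases Sym2.eq_iff.mp he with ⟨rfl, rfl⟩ | ⟨rfl, rfl⟩
      · exact ⟨Or.inl ⟨rfl, rfl⟩, h.ne⟩
      · exact ⟨Or.inr ⟨rfl, rfl⟩, h.ne⟩
    · left; left
      rw [hT₀def, sdiff_adj, fromEdgeSet_adj]
      exact ⟨h, fun ⟨hm, _⟩ => he (Set.mem_singleton_iff.mp hm)⟩
  have hG1conn : (T' ⊔ edge i j).Connected := hT.isConnected.mono hle
  have hreach : ((T' ⊔ edge i j) \ fromEdgeSet {s(i,j)}).Reachable i j := hT'rij.mono e1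
  have hT'conn : T'.Connected := by
    rw [connected_iff]
    refine ⟨fun v w => ?_, hT.isConnected.nonempty⟩
    obtain ⟨wk⟩ := hG1conn.preconnected v w
    rcases walk_tri i j wk with h1 | ⟨h2, h3⟩ | ⟨h2, h3⟩
    · exact h1.mono e2
    · exact ((h2.trans (hreach.trans h3))).mono e2
    · exact ((h2.trans (hreach.symm.trans h3))).mono e2
  have hT'acyc : T'.IsAcyclic := by
    intro u c hc
    by_cases hmem : s(i, k) ∈ c.edges
    · have h2 := (adj_and_reachable_delete_edges_iff_exists_cycle.mpr ⟨u, c, hc, hmem⟩).2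
      have hle2 : T' \ fromEdgeSet {s(i,k)} ≤ T₀ := by
        intro v w h
        rw [sdiff_adj, fromEdgeSet_adj] at h
        rcases h.1 with h1 | h1
        · exact h1
        · exfalso
          rw [edge_adj] at h1
          apply h.2
          refine ⟨?_, h1.2⟩
          rcases h1.1 with ⟨rfl, rfl⟩ | ⟨rfl, rfl⟩
          · rfl
          · exact Sym2.eq_swap
      exact hbridge ((h2.mono hle2).trans hr.symm)
    · have hsub : ∀ e ∈ c.edges, e ∈ T.edgeSet := by
        intro e hee
        have : e ∈ T'.edgeSet := c.edges_subset_edgeSet hee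
        rw [hT'def, edgeSet_sup, edge_edgeSet_of_ne hki.symm] at this
        rcases this with h1 | h1
        · rw [hT₀def, edgeSet_sdiff] at h1
          exact h1.1
        · exact absurd (Set.mem_singleton_iff.mp h1 ▸ hee) hmem
      exact hT.IsAcyclic (c.transfer T hsub) (hc.transfer hsub)
  have hT'tree : T'.IsTree := ⟨hT'conn, hT'acyc⟩
  -- weight comparison
  have hedge : ∀ e : Sym2 (Fin n), e ∈ T'.edgeSet ↔ (e ∈ T.edgeSet ∧ e ≠ s(i,j)) ∨ e = s(i,k) := by
    intro e
    rw [hT'def, edgeSet_sup, edge_edgeSet_of_ne hki.symm, hT₀def, edgeSet_sdiff,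
      edgeSet_fromEdgeSet]
    have hnd : ¬ (s(i,j) : Sym2 (Fin n)).IsDiag := by simp [hij]
    simp only [Set.mem_union, Set.mem_diff, Set.mem_singleton_iff, Set.mem_setOf_eq]
    constructor
    · rintro (⟨h1, h2⟩ | h1)
      · exact Or.inl ⟨h1, fun hh => h2 ⟨hh, by rw [hh]; exact hnd⟩⟩
      · exact Or.inr h1
    · rintro (⟨h1, h2⟩ | h1)
      · exact Or.inl ⟨h1, fun hh => h2 hh.1⟩
      · exact Or.inr h1
  have hwlt : euclWeight n p T' < euclWeight n p T := by
    have hmem1 : s(i,j) ∈ T.edgeSet := hadj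
    have hmem2 : s(i,k) ∉ T.edgeSet := hTik
    rw [euclWeight, euclWeight]
    have h := filter_sum_lt
      (Sym2.lift ⟨fun a b => dist (p a) (p b), fun a b => dist_comm (p a) (p b)⟩)
      T.edgeSet T'.edgeSet s(i,j) s(i,k) hmem1 hmem2 hedge (by simpa using hik)
    convert h using 3
  exact absurd (hmin T' hT'tree) (not_le.mpr hwlt)

theorem mst_subgraph_rng (n : ℕ) (p : Fin n → EuclideanSpace ℝ (Fin 2))
    (hinj : Function.Injective p)
    (hdist : ∀ i j k l : Fin n, i ≠ j → k ≠ l →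
      dist (p i) (p j) = dist (p k) (p l) → (i = k ∧ j = l) ∨ (i = l ∧ j = k))
    (T : SimpleGraph (Fin n)) (hT : T.IsTree)
    (hmin : ∀ T' : SimpleGraph (Fin n), T'.IsTree →
      euclWeight n p T ≤ euclWeight n p T') :
    T ≤ rngGraph n p ∧ (1 ≤ n → n - 1 ≤ (rngGraph n p).edgeSet.ncard) := by
  classical
  have hmain : T ≤ rngGraph n p := by
    intro a b hab
    by_contra hnadj
    have hne : a ≠ b := hab.ne
    rw [rngGraph, SimpleGraph.fromRel_adj, not_and, not_or] at hnadj
    obtain ⟨k, hk1, hk2⟩ := not_not.mp (hnadj hne).1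
    have hik : dist (p a) (p k) < dist (p a) (p b) := by
      rw [dist_eq_norm, dist_eq_norm]; exact hk1
    have hjk : dist (p b) (p k) < dist (p a) (p b) := by
      rw [dist_eq_norm, dist_eq_norm]; exact hk2
    have hbridge : ¬(T \ SimpleGraph.fromEdgeSet {s(a,b)}).Reachable a b :=
      (SimpleGraph.isBridge_iff.mp
        (SimpleGraph.isAcyclic_iff_forall_adj_isBridge.mp hT.IsAcyclic hab))
    obtain ⟨wk⟩ := hT.isConnected.preconnected a k
    rcases walk_tri a b wk with h1 | ⟨h2, h3⟩ | ⟨h2, h3⟩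
    · refine exchange n p T hT hmin b a k hab.symm ?_ ?_ ?_
      · rw [dist_comm (p b) (p a)]; exact hjk
      · rw [dist_comm (p b) (p a)]; exact hik
      · rw [show (s(b,a) : Sym2 (Fin n)) = s(a,b) from Sym2.eq_swap]; exact h1
    · exact exchange n p T hT hmin a b k hab hik hjk h3
    · exact hbridge h2
  refine ⟨hmain, fun hn => ?_⟩
  have hcard : T.edgeFinset.card + 1 = n := by
    simpa using hT.card_edgeFinset
  have h1 : T.edgeSet.ncard = T.edgeFinset.card := by
    rw [← SimpleGraph.coe_edgeFinset, Set.ncard_coe_finset]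
  have h2 : T.edgeSet.ncard ≤ (rngGraph n p).edgeSet.ncard :=
    Set.ncard_le_ncard (SimpleGraph.edgeSet_mono hmain) (Set.toFinite _)
  omega
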